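/- In the measure setting, let K be an intermediate field with E ⊆ K ⊆ L and K ∩ k_L = k. Let G̃ be a profinite group together with a continuous surjective homomorphism φ̃: G̃ → Gal(k_L/k) such that φ̃ is a Frattini cover and G̃ is projective (these two conditions characterize G̃ as the universal Frattini cover of Gal(k_L/k)). Then for F ∈ 𝒮(L/K), the field F is maximal with respect to inclusion in 𝒮(L/K) if and only if there exists a continuous surjective homomorphism from G̃ onto the finite group Gal(L/F). -/

import Mathlib

open IntermediateField

section MeasureSetting

variable (k E L : Type) [Field k] [Field E] [Field L]
  [Algebra k E] [Algebra E L] [Algebra k L] [IsScalarTower k E L]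

/-- `E` is regular over `k`: every element of `E` algebraic over `k` lies in `k`. -/
def IsRegularExtension (k E : Type*) [Field k] [Field E] [Algebra k E] : Prop :=
  ∀ x : E, IsAlgebraic k x → x ∈ (algebraMap k E).range

/-- `𝒮(L/K)`: the set of intermediate fields `F` with `K ⊆ F ⊆ L` and `F ∩ k_L = k`,
where `k_L` is the relative separable closure of `k` in `L`. -/
def SS (K : IntermediateField E L) : Set (IntermediateField E L) :=
  {F | K ≤ F ∧ F.restrictScalars k ⊓ separableClosure k L = ⊥}

variable (n : ℕ)

/-- The automorphism `σ ∈ Gal(L/K)` restricts to `ρ ∈ Gal(k_L/k)` on `k_L`. -/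
def RestrictsTo (K : IntermediateField E L) (σ : L ≃ₐ[K] L)
    (ρ : ↥(separableClosure k L) ≃ₐ[k] ↥(separableClosure k L)) : Prop :=
  ∀ x : ↥(separableClosure k L), σ (x : L) = ((ρ x : L))

/-- `σ̄` is a lift of `ρ̄` to `Gal(L/K)`. -/
def IsLift (K : IntermediateField E L)
    (ρ : Fin n → (↥(separableClosure k L) ≃ₐ[k] ↥(separableClosure k L)))
    (σ : Fin n → (L ≃ₐ[K] L)) : Prop :=
  ∀ i, RestrictsTo k E L K (σ i) (ρ i)

/-- The fixed field in `L` of the subgroup generated by `σ₁, …, σₙ ∈ Gal(L/K)`,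
viewed as an intermediate field of `L/E`. -/
def FixT (K : IntermediateField E L) (σ : Fin n → (L ≃ₐ[K] L)) : IntermediateField E L :=
  (IntermediateField.fixedField (Subgroup.closure (Set.range σ))).restrictScalars E

/-- The compositum `K·k_L`, as an intermediate field of `L/K`. -/
def compKL (K : IntermediateField E L) : IntermediateField K L :=
  IntermediateField.adjoin K ((separableClosure k L : IntermediateField k L) : Set L)

/-- `μ¹_{L/K}(X)` computed from a chosen lift `σ'` of `ρ̄`:
`|{τ̄ ∈ Gal(L/K·k_L)ⁿ : Fix(σ'₁τ₁,…,σ'ₙτₙ) ∈ X}| / [L : K·k_L]ⁿ`, where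
`Gal(L/K·k_L)` is the subgroup of `Gal(L/K)` fixing `k_L` (equivalently `K·k_L`)
pointwise. -/
noncomputable def mu1Lift (K : IntermediateField E L) (σ' : Fin n → (L ≃ₐ[K] L))
    (X : Set (IntermediateField E L)) : ℚ :=
  (Nat.card {τ : Fin n → ↥((compKL k E L K).fixingSubgroup) //
      FixT E L n K (fun i => σ' i * ((τ i : L ≃ₐ[K] L))) ∈ X} : ℚ) /
    ((Module.finrank ↥(compKL k E L K) L : ℚ)) ^ n

/-- `μ¹_{L/K}(X)`, in lift-free form: the set of tuples `σ̄'τ̄` with `σ̄'` a fixed lift of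
`ρ̄` and `τ̄ ∈ Gal(L/K·k_L)ⁿ` is exactly the set of tuples `ᾱ ∈ Gal(L/K)ⁿ` lifting `ρ̄`,
so `μ¹_{L/K}(X) = |{ᾱ ∈ Gal(L/K)ⁿ : ᾱ lifts ρ̄ and Fix(ᾱ) ∈ X}| / [L : K·k_L]ⁿ`. -/
noncomputable def mu1 (ρ : Fin n → (↥(separableClosure k L) ≃ₐ[k] ↥(separableClosure k L)))
    (K : IntermediateField E L) (X : Set (IntermediateField E L)) : ℚ :=
  (Nat.card {α : Fin n → (L ≃ₐ[K] L) //
      IsLift k E L n K ρ α ∧ FixT E L n K α ∈ X} : ℚ) /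
    ((Module.finrank ↥(compKL k E L K) L : ℚ)) ^ n

/-- The iterated measures `μⁱ_{L/K}` on singletons: `μ⁰_{L/K}` is the point mass at `K`,
and `μ^{i+1}_{L/K}({F}) = Σ_{F' ∈ 𝒮(L/K)} μⁱ_{L/K}({F'})·μ¹_{L/F'}({F})`. -/
noncomputable def muI (ρ : Fin n → (↥(separableClosure k L) ≃ₐ[k] ↥(separableClosure k L)))
    (K : IntermediateField E L) : ℕ → IntermediateField E L → ℚ
  | 0, F => ({K} : Set (IntermediateField E L)).indicator 1 F
  | (i+1), F => ∑ᶠ F' ∈ SS k E L K, muI ρ K i F' * mu1 k E L n ρ F' {F}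

end MeasureSetting

/-- A topological (profinite) group `G` is projective: every continuous epimorphism
`α : G → A` to a finite group and epimorphism `β : B → A` of finite groups admit a
continuous homomorphism `γ : G → B` with `β ∘ γ = α`. -/
def IsProjectiveProfiniteGroup (G : Type*) [Group G] [TopologicalSpace G] : Prop :=
  ∀ (A B : Type) [Group A] [Group B] [Finite A] [Finite B]
    [TopologicalSpace A] [DiscreteTopology A] [TopologicalSpace B] [DiscreteTopology B]
    (α : G →* A) (β : B →* A),
    Continuous α → Function.Surjective α → Function.Surjective β →
      ∃ γ : G →* B, Continuous γ ∧ β.comp γ = α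


open Subgroup

section AuxGroup

variable {B C Q : Type*} [Group B] [Group C] [Group Q]

lemma aux_isCoatom_map {f : B →* C} (hf : Function.Surjective f) {M : Subgroup B}
    (hker : f.ker ≤ M) (hM : IsCoatom M) : IsCoatom (M.map f) := by
  constructor
  · intro h
    apply hM.1
    have h2 := congrArg (Subgroup.comap f) h
    rwa [comap_map_eq, sup_of_le_left hker, comap_top] at h2
  · intro H hH
    have hMH : M < Subgroup.comap f H := by
      have h1 : Subgroup.comap f (M.map f) ≤ Subgroup.comap f H := comap_mono hH.le
      rw [comap_map_eq, sup_of_le_left hker] at h1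
      refine lt_of_le_of_ne h1 fun hEq => hH.ne ?_
      have := congrArg (Subgroup.map f) hEq
      rwa [map_comap_eq_self_of_surjective hf] at this
    have h3 : Subgroup.comap f H = ⊤ := hM.2 _ hMH
    have h4 := congrArg (Subgroup.map f) h3
    rwa [map_comap_eq_self_of_surjective hf, map_top_of_surjective f hf] at h4

lemma aux_mem_frattini {y : B} (hy : ∀ M : Subgroup B, IsCoatom M → y ∈ M) :
    y ∈ frattini B := by
  rw [frattini, Order.radical]
  simp only [Subgroup.mem_iInf, Set.mem_setOf_eq]
  exact fun M hM => hy M hM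

lemma aux_frattini_quotient_eq_bot {f : B →* C} (hf : Function.Surjective f)
    (hker : f.ker = frattini B) : frattini C = ⊥ := by
  rw [eq_bot_iff]
  intro x hx
  obtain ⟨y, rfl⟩ := hf x
  have hy : y ∈ frattini B := by
    refine aux_mem_frattini fun M hM => ?_
    have hkM : f.ker ≤ M := hker ▸ frattini_le_coatom hM
    have hco : IsCoatom (M.map f) := aux_isCoatom_map hf hkM hM
    have hxM : f y ∈ M.map f := frattini_le_coatom hco hx
    obtain ⟨m, hm, hmy⟩ := hxM
    have : m⁻¹ * y ∈ f.ker := by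
      rw [MonoidHom.mem_ker, map_mul, map_inv, hmy, inv_mul_cancel]
    have := mul_mem hm (hkM this)
    simpa using this
  rw [← hker] at hy
  simpa [Subgroup.mem_bot] using hy

/-- If `B` is finite, `r : B →* Q` and there is a surjection `e : B → B/Φ(B)`
whose kernel contains `ker r`, then `ker r ≤ Φ(B)`. -/
lemma aux_ker_le_frattini [Finite B] (r : B →* Q) (e : B →* B ⧸ frattini B)
    (he : Function.Surjective e) (hle : r.ker ≤ e.ker) : r.ker ≤ frattini B := by
  have h1 : frattini (B ⧸ frattini B) = ⊥ :=
    aux_frattini_quotient_eq_bot (QuotientGroup.mk'_surjective (frattini B))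
      (QuotientGroup.ker_mk' (frattini B))
  have h2 : frattini B ≤ e.ker := by
    have := frattini_le_comap_frattini_of_surjective he
    rwa [h1, e.comap_bot] at this
  have h3 : Nat.card (B ⧸ e.ker) = Nat.card (B ⧸ frattini B) :=
    Nat.card_congr (QuotientGroup.quotientKerEquivOfSurjective e he).toEquiv
  have h4 : Nat.card e.ker = Nat.card (frattini B) := by
    have c1 := Subgroup.card_eq_card_quotient_mul_card_subgroup e.ker
    have c2 := Subgroup.card_eq_card_quotient_mul_card_subgroup (frattini B)
    rw [h3] at c1
    have hpos : 0 < Nat.card (B ⧸ frattini B) := Nat.card_pos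
    exact Nat.eq_of_mul_eq_mul_left hpos (by rw [← c1, ← c2])
  have h5 : e.ker = frattini B := by
    have : (frattini B : Set B) = (e.ker : Set B) :=
      Set.eq_of_subset_of_ncard_le h2
        (by rw [← Nat.card_coe_set_eq, ← Nat.card_coe_set_eq]
            exact le_of_eq (by exact_mod_cast h4))
        (Set.toFinite _)
    exact (SetLike.ext' this).symm
  exact h5 ▸ hle

/-- If `B` is finite with `ker r ≤ Φ(B)`, then `r` is a Frattini cover:
any subgroup mapping onto the image is everything. -/
lemma aux_frattini_cover [Finite B] {r : B →* Q} (hker : r.ker ≤ frattini B)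
    {H₀ : Subgroup B} (hmap : Subgroup.map r H₀ = ⊤) : H₀ = ⊤ := by
  have h1 : H₀ ⊔ r.ker = ⊤ := by
    have := congrArg (Subgroup.comap r) hmap
    rwa [comap_map_eq, comap_top] at this
  exact frattini_nongenerating (top_le_iff.mp
    (h1 ▸ sup_le_sup_left hker H₀ : (⊤ : Subgroup B) ≤ H₀ ⊔ frattini B))

end AuxGroup



section AuxGalois

variable (k E L : Type) [Field k] [Field E] [Field L]
  [Algebra k E] [Algebra E L] [Algebra k L] [IsScalarTower k E L]

instance auxTower (F : IntermediateField E L) : IsScalarTower k ↥F L :=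
  IsScalarTower.of_algebraMap_eq fun _ => rfl

lemma mem_fixedField_iff' {F E' : Type*} [Field F] [Field E'] [Algebra F E']
    (H : Subgroup (E' ≃ₐ[F] E')) (x : E') :
    x ∈ IntermediateField.fixedField H ↔ ∀ σ ∈ H, σ x = x :=
  ⟨fun h σ hσ => h ⟨σ, hσ⟩, fun h g => h g g.2⟩

lemma aux_fixedField_top (F E' : Type*) [Field F] [Field E'] [Algebra F E']
    [FiniteDimensional F E'] [IsGalois F E'] :
    IntermediateField.fixedField (⊤ : Subgroup (E' ≃ₐ[F] E')) = ⊥ := by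
  rw [← (IntermediateField.fixingSubgroup_bot : (⊥ : IntermediateField F E').fixingSubgroup = ⊤),
    IsGalois.fixedField_fixingSubgroup]

variable [IsGalois k ↥(separableClosure k L)]

/-- The restriction homomorphism `Gal(L/F) → Gal(k_L/k)`. -/
noncomputable def resHom (F : IntermediateField E L) :
    (L ≃ₐ[↥F] L) →* (↥(separableClosure k L) ≃ₐ[k] ↥(separableClosure k L)) :=
  (AlgEquiv.restrictNormalHom ↥(separableClosure k L)).comp
    { toFun := fun σ => AlgEquiv.restrictScalars k σ
      map_one' := rfl
      map_mul' := fun _ _ => rfl }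

lemma resHom_apply (F : IntermediateField E L) (σ : L ≃ₐ[↥F] L)
    (x : ↥(separableClosure k L)) : (resHom k E L F σ x : L) = σ (x : L) := by
  exact AlgEquiv.restrictNormalHom_apply (separableClosure k L)
    (AlgEquiv.restrictScalars k σ) x

variable [FiniteDimensional E L] [IsGalois E L] [FiniteDimensional k ↥(separableClosure k L)]

lemma aux_map_resHom_eq_top (F : IntermediateField E L) (H : Subgroup (L ≃ₐ[↥F] L))
    (hH : ((IntermediateField.fixedField H).restrictScalars E).restrictScalars k
        ⊓ separableClosure k L = ⊥) :
    Subgroup.map (resHom k E L F) H = ⊤ := by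
  set S := Subgroup.map (resHom k E L F) H with hS
  have hfix : IntermediateField.fixedField S = ⊥ := by
    rw [eq_bot_iff]
    intro x hx
    have hx' : ∀ σ ∈ H, σ (x : L) = (x : L) := by
      intro σ hσ
      have h1 := (mem_fixedField_iff' S x).mp hx (resHom k E L F σ)
        ⟨σ, hσ, rfl⟩
      rw [← resHom_apply k E L F σ x, h1]
    have hmem : (x : L) ∈ ((IntermediateField.fixedField H).restrictScalars E).restrictScalars k
        ⊓ separableClosure k L :=
      ⟨(mem_fixedField_iff' H _).mpr hx', x.2⟩
    rw [hH] at hmem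
    obtain ⟨c, hc⟩ := IntermediateField.mem_bot.mp hmem
    exact IntermediateField.mem_bot.mpr ⟨c, Subtype.ext (by simpa using hc)⟩
  have h2 := IntermediateField.fixingSubgroup_fixedField S
  rw [hfix, IntermediateField.fixingSubgroup_bot] at h2
  exact h2.symm

end AuxGalois

/-- let `G̃` be a profinite group with a continuous surjection
`φ̃ : G̃ → Gal(k_L/k)` which is a Frattini cover, and suppose `G̃` is projective
(so `G̃` is the universal Frattini cover of `Gal(k_L/k)`). Then `F ∈ 𝒮(L/K)` is maximal
with respect to inclusion if and only if there is a continuous surjective homomorphism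
from `G̃` onto `Gal(L/F)`. -/
theorem statement8
    (k E L : Type) [Field k] [Field E] [Field L] [PerfectField k]
    [Algebra k E] [Algebra E L] [Algebra k L] [IsScalarTower k E L]
    (hreg : IsRegularExtension k E)
    [FiniteDimensional E L] [IsGalois E L]
    [IsGalois k (separableClosure k L)]
    [FiniteDimensional k (separableClosure k L)]
    (K : IntermediateField E L)
    (hK : K.restrictScalars k ⊓ separableClosure k L = ⊥)
    (G' : Type) [Group G'] [TopologicalSpace G'] [IsTopologicalGroup G']
    [CompactSpace G'] [T2Space G'] [TotallyDisconnectedSpace G']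
    (φ : G' →* (↥(separableClosure k L) ≃ₐ[k] ↥(separableClosure k L)))
    (hcont : Continuous φ) (hsurj : Function.Surjective φ)
    (hfrattini : ∀ H₀ : Subgroup G', IsClosed (H₀ : Set G') →
      Subgroup.map φ H₀ = ⊤ → H₀ = ⊤)
    (hproj : IsProjectiveProfiniteGroup G')
    (F : IntermediateField E L) (hF : F ∈ SS k E L K) :
    (∀ F' ∈ SS k E L K, F ≤ F' → F' = F) ↔
      ∃ ψ : G' →* (L ≃ₐ[F] L), Continuous ψ ∧ Function.Surjective ψ := by
  classical
  set r := resHom k E L F with hr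
  -- `r` is surjective
  have hbotF : ((IntermediateField.fixedField (⊤ : Subgroup (L ≃ₐ[↥F] L))).restrictScalars
      E).restrictScalars k ⊓ separableClosure k L = ⊥ := by
    rw [aux_fixedField_top, IntermediateField.restrictScalars_bot_eq_self]
    exact hF.2
  have hrtop : Subgroup.map r ⊤ = ⊤ := aux_map_resHom_eq_top k E L F ⊤ hbotF
  have hrsurj : Function.Surjective r := by
    rw [← MonoidHom.range_eq_top, MonoidHom.range_eq_map]
    exact hrtop
  -- the Frattini property of `r`, given maximality of `F`
  have hFrat : (∀ F' ∈ SS k E L K, F ≤ F' → F' = F) →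
      ∀ H₀ : Subgroup (L ≃ₐ[↥F] L), Subgroup.map r H₀ = ⊤ → H₀ = ⊤ := by
    intro hmax H₀ hmap
    set F' := (IntermediateField.fixedField H₀).restrictScalars E with hF'def
    have hFF' : F ≤ F' := by
      intro x hx
      exact (mem_fixedField_iff' H₀ x).mpr fun σ _ => σ.commutes ⟨x, hx⟩
    have hF'SS : F' ∈ SS k E L K := by
      refine ⟨le_trans hF.1 hFF', ?_⟩
      rw [eq_bot_iff]
      rintro x ⟨hx1, hx2⟩
      have hfix : (⟨x, hx2⟩ : ↥(separableClosure k L)) ∈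
          IntermediateField.fixedField
            (⊤ : Subgroup (↥(separableClosure k L) ≃ₐ[k] ↥(separableClosure k L))) := by
        rw [mem_fixedField_iff']
        intro ρ _
        have hρ : ρ ∈ Subgroup.map r H₀ := by rw [hmap]; trivial
        obtain ⟨σ, hσ, rfl⟩ := hρ
        exact Subtype.ext (by
          rw [resHom_apply]
          exact (mem_fixedField_iff' H₀ x).mp hx1 σ hσ)
      rw [aux_fixedField_top] at hfix
      obtain ⟨c, hc⟩ := IntermediateField.mem_bot.mp hfix
      exact IntermediateField.mem_bot.mpr ⟨c, by simpa using congrArg Subtype.val hc⟩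
    have hEq : F' = F := hmax F' hF'SS hFF'
    have hbot' : IntermediateField.fixedField H₀ = ⊥ := by
      apply IntermediateField.restrictScalars_injective E
      rw [IntermediateField.restrictScalars_bot_eq_self]
      exact hEq
    have h3 := IntermediateField.fixingSubgroup_fixedField H₀
    rw [hbot', IntermediateField.fixingSubgroup_bot] at h3
    exact h3.symm
  constructor
  · -- maximal → surjection exists
    intro hmax
    obtain ⟨γ, hγc, hγe⟩ := hproj _ _ φ r hcont hsurj hrsurj
    refine ⟨γ, hγc, ?_⟩
    have hmapr : Subgroup.map r γ.range = ⊤ := by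
      rw [← MonoidHom.range_comp, hγe]
      exact MonoidHom.range_eq_top.mpr hsurj
    rw [← MonoidHom.range_eq_top]
    exact hFrat hmax γ.range hmapr
  · -- surjection exists → maximal
    rintro ⟨ψ, hψc, hψs⟩ F' hF' hle
    -- Step 1 : `ker φ ≤ ψ⁻¹(frattini Gal(L/F))`
    have hstep : φ.ker ≤ Subgroup.comap ψ (frattini (L ≃ₐ[↥F] L)) := by
      intro x hx
      refine aux_mem_frattini fun M hM => ?_
      by_contra hxM
      have hcoatom : IsCoatom (Subgroup.comap ψ M) :=
        Subgroup.isCoatom_comap_of_surjective hψs hM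
      have hsup : Subgroup.comap ψ M ⊔ φ.ker = ⊤ := by
        refine hcoatom.2 _ (lt_of_le_of_ne le_sup_left fun hEq => hxM ?_)
        have : x ∈ Subgroup.comap ψ M := hEq ▸ Subgroup.mem_sup_right hx
        exact this
      have hmapker : Subgroup.map φ φ.ker = ⊥ := by
        rw [eq_bot_iff]
        rintro y ⟨z, hz, rfl⟩
        simpa [Subgroup.mem_bot] using hz
      have hmapφ : Subgroup.map φ (Subgroup.comap ψ M) = ⊤ := by
        have h5 := congrArg (Subgroup.map φ) hsup
        rwa [Subgroup.map_sup, hmapker, sup_bot_eq, Subgroup.map_top_of_surjective φ hsurj]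
          at h5
      have hclosed : IsClosed ((Subgroup.comap ψ M : Set G')) :=
        (isClosed_discrete (M : Set (L ≃ₐ[↥F] L))).preimage hψc
      exact hcoatom.1 (hfrattini _ hclosed hmapφ)
    -- Step 2 : build the epimorphism `q : Gal(k_L/k) → Gal(L/F)/Φ`
    have hkercond : φ.ker ≤
        ((QuotientGroup.mk' (frattini (L ≃ₐ[↥F] L))).comp ψ).ker := by
      intro x hx
      have hx2 := hstep hx
      simp only [MonoidHom.mem_ker, MonoidHom.comp_apply, QuotientGroup.mk'_apply,
        QuotientGroup.eq_one_iff]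
      exact hx2
    set q : (↥(separableClosure k L) ≃ₐ[k] ↥(separableClosure k L)) →*
        (L ≃ₐ[↥F] L) ⧸ frattini (L ≃ₐ[↥F] L) :=
      (QuotientGroup.lift φ.ker ((QuotientGroup.mk' (frattini (L ≃ₐ[↥F] L))).comp ψ) hkercond).comp
        ((QuotientGroup.quotientKerEquivOfSurjective φ hsurj).symm.toMonoidHom) with hq
    have hqφ : ∀ x : G', q (φ x) = QuotientGroup.mk' (frattini (L ≃ₐ[↥F] L)) (ψ x) := by
      intro x
      have h1 : (QuotientGroup.quotientKerEquivOfSurjective φ hsurj).symm (φ x) =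
          QuotientGroup.mk x := by
        apply (QuotientGroup.quotientKerEquivOfSurjective φ hsurj).injective
        rw [MulEquiv.apply_symm_apply]
        rfl
      simp only [hq, MonoidHom.comp_apply, MulEquiv.coe_toMonoidHom, h1]
      rfl
    have hqs : Function.Surjective q := by
      intro y
      obtain ⟨b, rfl⟩ := QuotientGroup.mk'_surjective (frattini (L ≃ₐ[↥F] L)) y
      obtain ⟨x, rfl⟩ := hψs b
      exact ⟨φ x, hqφ x⟩
    -- Step 3 : `ker r ≤ frattini Gal(L/F)`, hence the Frattini property of `r`
    have hkerle : r.ker ≤ (q.comp r).ker := fun x hx => by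
      simp only [MonoidHom.mem_ker] at hx ⊢
      rw [MonoidHom.comp_apply, hx, map_one]
    have hker : r.ker ≤ frattini (L ≃ₐ[↥F] L) :=
      aux_ker_le_frattini r (q.comp r) (hqs.comp hrsurj) hkerle
    -- Step 4 : conclude `F' = F`
    set F'' := IntermediateField.extendScalars hle with hF''
    have hfixF'' : IntermediateField.fixedField F''.fixingSubgroup = F'' :=
      IsGalois.fixedField_fixingSubgroup F''
    have hmapF'' : Subgroup.map r F''.fixingSubgroup = ⊤ := by
      apply aux_map_resHom_eq_top
      rw [hfixF'', IntermediateField.extendScalars_restrictScalars]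
      exact hF'.2
    have h1 : F''.fixingSubgroup = ⊤ := aux_frattini_cover hker hmapF''
    have h2 : F'' = ⊥ := by rw [← hfixF'', h1, aux_fixedField_top]
    have h3 := congrArg (IntermediateField.restrictScalars E) h2
    rwa [IntermediateField.extendScalars_restrictScalars,
      IntermediateField.restrictScalars_bot_eq_self] at h3
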